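/- Let X = Σ_{i=1}^n X_i where |X_i| ≤ C for each i, and suppose Σ_i E[|X_i| | X_1,...,X_{i-1}] ≤ μ pointwise. Then for any c > 0, P(|X| > (1+c)μ) ≤ 2 exp(-μ c^2 / (2(1+2c)C)). -/

import Mathlib

open MeasureTheory

section Aux
open Real


lemma aux_log_lb {x : ℝ} (hx : 0 ≤ x) : 2*x/(2+x) ≤ Real.log (1+x) := by
  have hd : ∀ y : ℝ, 0 < y → HasDerivAt (fun y : ℝ => (2+y) * Real.log (1+y) - 2*y)
      (1 * Real.log (1+y) + (2+y) * (1/(1+y)) - 2) y := by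
    intro y hy
    have h1 : (0:ℝ) < 1 + y := by linarith
    have h2 : HasDerivAt (fun y : ℝ => Real.log (1+y)) (1/(1+y)) y := by
      simpa using (((hasDerivAt_id y).const_add 1).log h1.ne')
    have h5 : HasDerivAt (fun y : ℝ => 2*y) 2 y := by
      simpa using (hasDerivAt_id y).const_mul (2:ℝ)
    exact (((hasDerivAt_id y).const_add 2).mul h2).sub h5
  have key : MonotoneOn (fun y : ℝ => (2+y) * Real.log (1+y) - 2*y) (Set.Ici 0) := by
    apply monotoneOn_of_deriv_nonneg (convex_Ici 0)
    · refine ContinuousOn.sub (ContinuousOn.mul (by fun_prop) ?_) (by fun_prop)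
      refine ContinuousOn.log (by fun_prop) ?_
      intro y hy; have : (0:ℝ) ≤ y := hy; positivity
    · rw [interior_Ici]
      exact fun y hy => ((hd y hy).differentiableAt).differentiableWithinAt
    · intro y hy
      rw [interior_Ici] at hy
      have hy : (0:ℝ) < y := hy
      have h1 : (0:ℝ) < 1 + y := by linarith
      rw [(hd y hy).deriv]
      have hlog : 1 - 1/(1+y) ≤ Real.log (1+y) := by
        have := Real.log_le_sub_one_of_pos (inv_pos.mpr h1)
        rw [Real.log_inv, ← one_div] at this
        linarith
      have h3 : (2+y) * (1/(1+y)) = 2*(1/(1+y)) + y/(1+y) := by field_simp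
      have h4 : 1/(1+y) + y/(1+y) = 1 := by field_simp
      linarith
  have h0 := key (Set.self_mem_Ici) (Set.mem_Ici.mpr hx) hx
  simp only [add_zero, Real.log_one] at h0
  rw [div_le_iff₀ (by linarith : (0:ℝ) < 2+x)]
  nlinarith

lemma aux_exponent {c : ℝ} (hc : 0 < c) :
    c^2/(2*(1+2*c)) ≤ (1+c)*Real.log (1+c) - c := by
  have h := aux_log_lb hc.le
  rw [div_le_iff₀ (by linarith : (0:ℝ) < 2+c)] at h
  rw [div_le_iff₀ (by nlinarith : (0:ℝ) < 2*(1+2*c))]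
  nlinarith [mul_le_mul_of_nonneg_left h (by linarith : (0:ℝ) ≤ 1+c)]

lemma aux_convex {C c x : ℝ} (hC : 0 < C) (hc : 0 < c) (hx0 : 0 ≤ x) (hxC : x ≤ C) :
    Real.exp ((Real.log (1+c)/C) * x) ≤ 1 + (c/C) * x := by
  have ht0 : 0 ≤ x/C := by positivity
  have ht1 : x/C ≤ 1 := (div_le_one hC).mpr hxC
  have h := convexOn_exp.2 (Set.mem_univ (0:ℝ)) (Set.mem_univ (Real.log (1+c)))
    (by linarith : (0:ℝ) ≤ 1 - x/C) ht0 (by ring)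
  simp only [smul_eq_mul, mul_zero, zero_add, Real.exp_zero, mul_one] at h
  rw [Real.exp_log (by linarith)] at h
  have e1 : (Real.log (1+c)/C) * x = x/C * Real.log (1+c) := by ring
  rw [e1]
  calc Real.exp (x/C * Real.log (1+c)) ≤ (1 - x/C) + x/C*(1+c) := h
    _ = 1 + (c/C)*x := by field_simp; ring

lemma aux_key {Ω : Type*} {m0 : MeasurableSpace Ω} {P : Measure Ω} [IsProbabilityMeasure P]
    (X : ℕ → Ω → ℝ) (C c : ℝ) (hC : 0 < C) (hc : 0 < c)
    (hmeas : ∀ i, StronglyMeasurable (X i))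
    (hbdd : ∀ i ω, |X i ω| ≤ C) (n : ℕ) :
    ∫ ω, ∏ i ∈ Finset.Icc 1 n, Real.exp ((Real.log (1+c)/C) * |X i ω|
      - (c/C) * (P[fun ω' => |X i ω'| | (MeasureTheory.Filtration.natural X hmeas) (i - 1)]) ω) ∂P
      ≤ 1 := by
  set ℱ := MeasureTheory.Filtration.natural X hmeas with hℱ
  set lam := Real.log (1+c)/C with hlam
  have hlam_pos : 0 < lam := div_pos (Real.log_pos (by linarith)) hC
  set E : ℕ → Ω → ℝ := fun i => P[fun ω' => |X i ω'| | ℱ (i - 1)] with hE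
  set M : ℕ → Ω → ℝ := fun k ω => ∏ i ∈ Finset.Icc 1 k,
    Real.exp (lam * |X i ω| - (c/C) * E i ω) with hM
  -- basic facts
  have smX : ∀ i k, i ≤ k → StronglyMeasurable[ℱ k] (X i) := fun i k hik =>
    ((MeasureTheory.Filtration.stronglyAdapted_natural hmeas) i).mono (ℱ.mono hik)
  have smabsX : ∀ i, StronglyMeasurable (fun ω => |X i ω|) := fun i =>
    continuous_abs.comp_stronglyMeasurable (hmeas i)
  have smabsX' : ∀ i k, i ≤ k → StronglyMeasurable[ℱ k] (fun ω => |X i ω|) := fun i k hik =>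
    continuous_abs.comp_stronglyMeasurable (smX i k hik)
  have intabsX : ∀ i, Integrable (fun ω => |X i ω|) P := by
    intro i
    refine Integrable.mono' (integrable_const C) (smabsX i).aestronglyMeasurable ?_
    exact Filter.Eventually.of_forall fun ω => by
      rw [Real.norm_eq_abs, abs_abs]; exact hbdd i ω
  have smE : ∀ i k, i - 1 ≤ k → StronglyMeasurable[ℱ k] (E i) := fun i k hik =>
    stronglyMeasurable_condExp.mono (ℱ.mono hik)
  have hE_nonneg : ∀ᵐ ω ∂P, ∀ i, 0 ≤ E i ω := by
    rw [ae_all_iff]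
    intro i
    exact condExp_nonneg (Filter.Eventually.of_forall fun ω => abs_nonneg _)
  -- measurability of M k wrt ℱ k
  have smM : ∀ k, StronglyMeasurable[ℱ k] (M k) := by
    intro k
    apply Finset.stronglyMeasurable_fun_prod
    intro i hi
    rw [Finset.mem_Icc] at hi
    apply Real.continuous_exp.comp_stronglyMeasurable
    exact ((smabsX' i k hi.2).const_mul lam).sub ((smE i k (by omega)).const_mul (c/C))
  -- a.e. bound and nonnegativity of M k
  have hM_nonneg : ∀ k ω, 0 ≤ M k ω := fun k ω =>
    Finset.prod_nonneg fun i _ => (Real.exp_pos _).le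
  have hM_bdd : ∀ k, ∀ᵐ ω ∂P, M k ω ≤ Real.exp (lam * C) ^ k := by
    intro k
    filter_upwards [hE_nonneg] with ω hω
    calc M k ω ≤ ∏ i ∈ Finset.Icc 1 k, Real.exp (lam * C) := by
          apply Finset.prod_le_prod (fun i _ => (Real.exp_pos _).le)
          intro i _
          apply Real.exp_le_exp.mpr
          have h1 : lam * |X i ω| ≤ lam * C :=
            mul_le_mul_of_nonneg_left (hbdd i ω) hlam_pos.le
          have h2 : 0 ≤ (c/C) * E i ω := mul_nonneg (by positivity) (hω i)
          linarith
      _ ≤ Real.exp (lam * C) ^ k := by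
          rw [Finset.prod_const, Nat.card_Icc]; simp
  have hM_int : ∀ k, Integrable (M k) P := by
    intro k
    refine Integrable.mono' (integrable_const (Real.exp (lam * C) ^ k))
      ((smM k).mono (ℱ.le k)).aestronglyMeasurable ?_
    filter_upwards [hM_bdd k] with ω hω
    rw [Real.norm_eq_abs, abs_of_nonneg (hM_nonneg k ω)]
    exact hω
  -- the goal in terms of M
  suffices h : ∀ k, ∫ ω, M k ω ∂P ≤ 1 by exact h n
  intro n
  induction n with
  | zero =>
    have : M 0 = fun _ => 1 := by
      funext ω; simp [hM]
    rw [this]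
    simp
  | succ k ih =>
    -- decompose
    have hdecomp : ∀ ω, M (k+1) ω
        = (M k ω * Real.exp (-((c/C) * E (k+1) ω))) * Real.exp (lam * |X (k+1) ω|) := by
      intro ω
      simp only [hM]
      rw [Finset.prod_Icc_succ_top (by omega : 1 ≤ k+1)]
      rw [sub_eq_add_neg, Real.exp_add]
      ring
    set g : Ω → ℝ := fun ω => M k ω * Real.exp (-((c/C) * E (k+1) ω)) with hg
    set f : Ω → ℝ := fun ω => Real.exp (lam * |X (k+1) ω|) with hf
    have smg : StronglyMeasurable[ℱ k] g := by
      apply (smM k).mul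
      apply Real.continuous_exp.comp_stronglyMeasurable
      exact ((smE (k+1) k (by omega)).const_mul (c/C)).neg
    have hg_nonneg : ∀ ω, 0 ≤ g ω := fun ω =>
      mul_nonneg (hM_nonneg k ω) (Real.exp_pos _).le
    have hg_bdd : ∀ᵐ ω ∂P, ‖g ω‖ ≤ Real.exp (lam * C) ^ k := by
      filter_upwards [hM_bdd k, hE_nonneg] with ω h1 h2
      rw [Real.norm_eq_abs, abs_of_nonneg (hg_nonneg ω), hg]
      have h3 : Real.exp (-((c/C) * E (k+1) ω)) ≤ 1 := by
          apply Real.exp_le_one_iff.mpr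
          simp only [neg_nonpos]
          exact mul_nonneg (by positivity) (h2 (k+1))
      calc M k ω * Real.exp (-((c/C) * E (k+1) ω)) ≤ M k ω * 1 :=
            mul_le_mul_of_nonneg_left h3 (hM_nonneg k ω)
        _ ≤ _ := by rw [mul_one]; exact h1
    have hf_bdd : ∀ ω, f ω ≤ Real.exp (lam * C) := fun ω =>
      Real.exp_le_exp.mpr (mul_le_mul_of_nonneg_left (hbdd _ ω) hlam_pos.le)
    have smf : StronglyMeasurable f :=
      Real.continuous_exp.comp_stronglyMeasurable ((smabsX (k+1)).const_mul lam)
    have hf_int : Integrable f P := by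
      refine Integrable.mono' (integrable_const (Real.exp (lam * C)))
        smf.aestronglyMeasurable ?_
      exact Filter.Eventually.of_forall fun ω => by
        rw [Real.norm_eq_abs, abs_of_nonneg (Real.exp_pos _).le]; exact hf_bdd ω
    have hgf_int : Integrable (g * f) P := by
      refine Integrable.mono' (integrable_const (Real.exp (lam * C) ^ k * Real.exp (lam * C)))
        ((smg.mono (ℱ.le k)).mul smf).aestronglyMeasurable ?_
      filter_upwards [hg_bdd] with ω h1
      rw [Pi.mul_apply, Real.norm_eq_abs, abs_mul, abs_of_nonneg (Real.exp_pos _).le]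
      rw [Real.norm_eq_abs] at h1
      exact mul_le_mul h1 (hf_bdd ω) (Real.exp_pos _).le (by positivity)
    -- pull-out
    have hpull : P[g * f | ℱ k] =ᵐ[P] g * P[f | ℱ k] :=
      condExp_stronglyMeasurable_mul_of_bound (ℱ.le k) smg hf_int _ hg_bdd
    -- condexp bound
    set φ : Ω → ℝ := (fun _ => (1:ℝ)) + (c/C) • (fun ω => |X (k+1) ω|) with hφ
    have hφ_int : Integrable φ P := (integrable_const 1).add ((intabsX (k+1)).smul (c/C))
    have hcond_f : P[f | ℱ k] ≤ᵐ[P] fun ω => Real.exp ((c/C) * E (k+1) ω) := by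
      have h1 : P[f | ℱ k] ≤ᵐ[P] P[φ | ℱ k] := by
        apply condExp_mono hf_int hφ_int
        refine Filter.Eventually.of_forall fun ω => ?_
        have := aux_convex hC hc (abs_nonneg (X (k+1) ω)) (hbdd (k+1) ω)
        simpa [hφ, hf, hlam] using this
      have h2 : P[φ | ℱ k] =ᵐ[P] fun ω => 1 + (c/C) * E (k+1) ω := by
        have ha := condExp_add (m := ℱ k) (μ := P) (integrable_const (1:ℝ))
          ((intabsX (k+1)).smul (c/C))
        have hb := condExp_const (ℱ.le k) (1:ℝ) (μ := P)
        have hsm := condExp_smul (m := ℱ k) (m₀ := m0) (μ := P) (c/C)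
          (fun ω => |X (k+1) ω|)
        filter_upwards [ha, hsm] with ω ha hsm
        calc (P[φ | ℱ k]) ω = (P[fun _ => (1:ℝ) | ℱ k]) ω
              + (P[(c/C) • (fun ω => |X (k+1) ω|) | ℱ k]) ω := ha
          _ = 1 + (c/C) * E (k+1) ω := by
              rw [hb, hsm]
              simp only [Pi.smul_apply, smul_eq_mul]
              rfl
      have h3 : (fun ω => 1 + (c/C) * E (k+1) ω)
          ≤ᵐ[P] fun ω => Real.exp ((c/C) * E (k+1) ω) :=
        Filter.Eventually.of_forall fun ω => by
          have := Real.add_one_le_exp ((c/C) * E (k+1) ω); linarith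
      filter_upwards [h1, h2, h3] with ω h1 h2 h3
      calc (P[f | ℱ k]) ω ≤ (P[φ | ℱ k]) ω := h1
        _ = 1 + (c/C) * E (k+1) ω := h2
        _ ≤ Real.exp ((c/C) * E (k+1) ω) := h3
    -- put together
    have step1 : ∫ ω, M (k+1) ω ∂P = ∫ ω, (g * f) ω ∂P :=
      integral_congr_ae (Filter.Eventually.of_forall fun ω => by rw [hdecomp ω]; rfl)
    have step2 : ∫ ω, (g * f) ω ∂P = ∫ ω, (P[g * f | ℱ k]) ω ∂P :=
      (integral_condExp (ℱ.le k) (f := g * f)).symm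
    have step3 : ∫ ω, (P[g * f | ℱ k]) ω ∂P ≤ ∫ ω, M k ω ∂P := by
      apply integral_mono_ae integrable_condExp (hM_int k)
      filter_upwards [hpull, hcond_f] with ω hpull hcond_f
      rw [hpull]
      calc (g * P[f | ℱ k]) ω = g ω * (P[f | ℱ k]) ω := rfl
        _ ≤ g ω * Real.exp ((c/C) * E (k+1) ω) :=
            mul_le_mul_of_nonneg_left hcond_f (hg_nonneg ω)
        _ = M k ω := by
            rw [hg, mul_assoc, ← Real.exp_add]
            simp
    calc ∫ ω, M (k+1) ω ∂P = ∫ ω, (P[g * f | ℱ k]) ω ∂P := by rw [step1, step2]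
      _ ≤ ∫ ω, M k ω ∂P := step3
      _ ≤ 1 := ih

end Aux

/-- generalized Chernoff bound, adaptive case: if `X = ∑_{i=1}^n X_i`
with `|X_i| ≤ C` and `∑_i E[|X_i| | X_1,…,X_{i-1}] ≤ μ` pointwise (conditioning on
the natural filtration of the sequence), then for `c > 0`,
`P(|X| > (1+c)μ) ≤ 2 exp(-μc²/(2(1+2c)C))`. -/
theorem stmt12 {Ω : Type*} {m0 : MeasurableSpace Ω} {P : Measure Ω}
    [IsProbabilityMeasure P]
    (n : ℕ) (X : ℕ → Ω → ℝ) (C c μ : ℝ)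
    (hC : 0 < C) (hc : 0 < c) (hμ : 0 < μ)
    (hmeas : ∀ i, StronglyMeasurable (X i))
    (h0 : X 0 = 0)
    (hbdd : ∀ i ω, |X i ω| ≤ C)
    (hcond : ∀ ω, ∑ i ∈ Finset.Icc 1 n,
        (P[fun ω' => |X i ω'| | (MeasureTheory.Filtration.natural X hmeas) (i - 1)]) ω ≤ μ) :
    P {ω | (1 + c) * μ < |∑ i ∈ Finset.Icc 1 n, X i ω|}
      ≤ ENNReal.ofReal (2 * Real.exp (-μ * c ^ 2 / (2 * (1 + 2 * c) * C))) := by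
  set ℱ := MeasureTheory.Filtration.natural X hmeas with hℱ
  set lam := Real.log (1+c)/C with hlam
  have hlog_pos : 0 < Real.log (1+c) := Real.log_pos (by linarith)
  have hlam_pos : 0 < lam := div_pos hlog_pos hC
  set E : ℕ → Ω → ℝ := fun i => P[fun ω' => |X i ω'| | ℱ (i - 1)] with hE
  set T : Ω → ℝ := fun ω => ∑ i ∈ Finset.Icc 1 n, |X i ω| with hT
  -- measurability and integrability of exp (lam * T)
  have smT : StronglyMeasurable T := by
    apply Finset.stronglyMeasurable_fun_sum
    exact fun i _ => continuous_abs.comp_stronglyMeasurable (hmeas i)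
  have hT_bdd : ∀ ω, T ω ≤ C * n := by
    intro ω
    calc T ω ≤ ∑ i ∈ Finset.Icc 1 n, C := Finset.sum_le_sum fun i _ => hbdd i ω
      _ ≤ C * n := by rw [Finset.sum_const, Nat.card_Icc]; simp [mul_comm]
  have hexpT_int : Integrable (fun ω => Real.exp (lam * T ω)) P := by
    refine Integrable.mono' (integrable_const (Real.exp (lam * (C * n))))
      (Real.continuous_exp.comp_stronglyMeasurable (smT.const_mul lam)).aestronglyMeasurable ?_
    refine Filter.Eventually.of_forall fun ω => ?_
    rw [Real.norm_eq_abs, abs_of_nonneg (Real.exp_pos _).le]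
    exact Real.exp_le_exp.mpr (mul_le_mul_of_nonneg_left (hT_bdd ω) hlam_pos.le)
  -- bound on the mgf
  have hM_int : Integrable (fun ω => ∏ i ∈ Finset.Icc 1 n,
      Real.exp (lam * |X i ω| - (c/C) * E i ω)) P := by
    have hE_nonneg : ∀ᵐ ω ∂P, ∀ i, 0 ≤ E i ω := by
      rw [ae_all_iff]
      exact fun i => condExp_nonneg (Filter.Eventually.of_forall fun ω => abs_nonneg _)
    have smM : StronglyMeasurable fun ω => ∏ i ∈ Finset.Icc 1 n,
        Real.exp (lam * |X i ω| - (c/C) * E i ω) := by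
      apply Finset.stronglyMeasurable_fun_prod
      intro i _
      apply Real.continuous_exp.comp_stronglyMeasurable
      exact ((continuous_abs.comp_stronglyMeasurable (hmeas i)).const_mul lam).sub
        ((stronglyMeasurable_condExp.mono (ℱ.le (i-1))).const_mul (c/C))
    refine Integrable.mono' (integrable_const (Real.exp (lam * C) ^ n))
      smM.aestronglyMeasurable ?_
    filter_upwards [hE_nonneg] with ω hω
    rw [Real.norm_eq_abs,
      abs_of_nonneg (Finset.prod_nonneg fun i _ => (Real.exp_pos _).le)]
    calc ∏ i ∈ Finset.Icc 1 n, Real.exp (lam * |X i ω| - (c/C) * E i ω)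
        ≤ ∏ i ∈ Finset.Icc 1 n, Real.exp (lam * C) := by
          apply Finset.prod_le_prod (fun i _ => (Real.exp_pos _).le)
          intro i _
          apply Real.exp_le_exp.mpr
          have h1 : lam * |X i ω| ≤ lam * C :=
            mul_le_mul_of_nonneg_left (hbdd i ω) hlam_pos.le
          have h2 : 0 ≤ (c/C) * E i ω := mul_nonneg (by positivity) (hω i)
          linarith
      _ ≤ Real.exp (lam * C) ^ n := by
          rw [Finset.prod_const, Nat.card_Icc]; simp
  have hmgf : ∫ ω, Real.exp (lam * T ω) ∂P ≤ Real.exp ((c/C) * μ) := by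
    have hpt : ∀ ω, Real.exp (lam * T ω)
        ≤ (∏ i ∈ Finset.Icc 1 n, Real.exp (lam * |X i ω| - (c/C) * E i ω))
          * Real.exp ((c/C) * μ) := by
      intro ω
      rw [← Real.exp_sum, ← Real.exp_add]
      apply Real.exp_le_exp.mpr
      have h1 : lam * T ω = ∑ i ∈ Finset.Icc 1 n, lam * |X i ω| := by
        rw [hT, Finset.mul_sum]
      have h2 : ∑ i ∈ Finset.Icc 1 n, (lam * |X i ω| - (c/C) * E i ω)
          = ∑ i ∈ Finset.Icc 1 n, lam * |X i ω| - (c/C) * ∑ i ∈ Finset.Icc 1 n, E i ω := by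
        rw [Finset.sum_sub_distrib, Finset.mul_sum]
      have h3 : (c/C) * ∑ i ∈ Finset.Icc 1 n, E i ω ≤ (c/C) * μ :=
        mul_le_mul_of_nonneg_left (hcond ω) (by positivity)
      rw [h1, h2]
      linarith
    calc ∫ ω, Real.exp (lam * T ω) ∂P
        ≤ ∫ ω, (∏ i ∈ Finset.Icc 1 n, Real.exp (lam * |X i ω| - (c/C) * E i ω))
            * Real.exp ((c/C) * μ) ∂P := by
          apply integral_mono hexpT_int (hM_int.mul_const _)
          exact hpt
      _ = (∫ ω, ∏ i ∈ Finset.Icc 1 n, Real.exp (lam * |X i ω| - (c/C) * E i ω) ∂P)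
            * Real.exp ((c/C) * μ) := integral_mul_const _ _
      _ ≤ 1 * Real.exp ((c/C) * μ) := by
          apply mul_le_mul_of_nonneg_right _ (Real.exp_pos _).le
          exact aux_key X C c hC hc hmeas hbdd n
      _ = Real.exp ((c/C) * μ) := one_mul _
  -- Chernoff
  have hchern := ProbabilityTheory.measure_ge_le_exp_mul_mgf (μ := P) (X := T)
    ((1+c)*μ) hlam_pos.le hexpT_int
  have hsub : {ω | (1 + c) * μ < |∑ i ∈ Finset.Icc 1 n, X i ω|}
      ⊆ {ω | (1+c)*μ ≤ T ω} := by
    intro ω hω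
    have h1 : |∑ i ∈ Finset.Icc 1 n, X i ω| ≤ T ω := Finset.abs_sum_le_sum_abs _ _
    exact le_trans (le_of_lt hω) h1
  have hmgf' : ProbabilityTheory.mgf T P lam ≤ Real.exp ((c/C) * μ) := hmgf
  have hnum : Real.exp (-lam * ((1+c)*μ)) * Real.exp ((c/C) * μ)
      ≤ 2 * Real.exp (-μ * c ^ 2 / (2 * (1 + 2 * c) * C)) := by
    rw [← Real.exp_add]
    have key : -lam * ((1+c)*μ) + (c/C) * μ ≤ -μ * c ^ 2 / (2 * (1 + 2 * c) * C) := by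
      have h := mul_le_mul_of_nonneg_left (aux_exponent hc) (le_of_lt (div_pos hμ hC))
      have e1 : -lam * ((1+c)*μ) + (c/C) * μ
          = -(μ/C) * ((1+c)*Real.log (1+c) - c) := by rw [hlam]; field_simp; ring
      have e2 : -μ * c ^ 2 / (2 * (1 + 2 * c) * C) = -(μ/C) * (c^2/(2*(1+2*c))) := by
        field_simp
      rw [e1, e2]
      nlinarith
    calc Real.exp (-lam * ((1+c)*μ) + (c/C) * μ)
        ≤ Real.exp (-μ * c ^ 2 / (2 * (1 + 2 * c) * C)) := Real.exp_le_exp.mpr key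
      _ ≤ 2 * Real.exp (-μ * c ^ 2 / (2 * (1 + 2 * c) * C)) := by
          nlinarith [Real.exp_pos (-μ * c ^ 2 / (2 * (1 + 2 * c) * C))]
  -- conclude
  have hfinal : (P {ω | (1 + c) * μ < |∑ i ∈ Finset.Icc 1 n, X i ω|}).toReal
      ≤ 2 * Real.exp (-μ * c ^ 2 / (2 * (1 + 2 * c) * C)) := by
    have hmono : P {ω | (1 + c) * μ < |∑ i ∈ Finset.Icc 1 n, X i ω|}
        ≤ P {ω | (1+c)*μ ≤ T ω} := measure_mono hsub
    have h1 : (P {ω | (1 + c) * μ < |∑ i ∈ Finset.Icc 1 n, X i ω|}).toReal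
        ≤ (P {ω | (1+c)*μ ≤ T ω}).toReal :=
      ENNReal.toReal_mono (measure_ne_top _ _) hmono
    calc (P {ω | (1 + c) * μ < |∑ i ∈ Finset.Icc 1 n, X i ω|}).toReal
        ≤ (P {ω | (1+c)*μ ≤ T ω}).toReal := h1
      _ ≤ Real.exp (-lam * ((1+c)*μ)) * ProbabilityTheory.mgf T P lam := hchern
      _ ≤ Real.exp (-lam * ((1+c)*μ)) * Real.exp ((c/C) * μ) :=
          mul_le_mul_of_nonneg_left hmgf' (Real.exp_pos _).le
      _ ≤ 2 * Real.exp (-μ * c ^ 2 / (2 * (1 + 2 * c) * C)) := hnum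
  rw [ENNReal.le_ofReal_iff_toReal_le (measure_ne_top _ _) (by positivity)]
  exact hfinal
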